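/- There is a constant c such that, for every formula F provable in CL5⁻ of length k, there exists a CL5⁻ proof of F using at most c·k⁶ applications of rules. -/

import Mathlib

namespace CirquentCalc

/-- Formulas: literals (negation applied only to atoms), ∧, ∨. -/
inductive Fml where
  | pos : ℕ → Fml
  | neg : ℕ → Fml
  | and : Fml → Fml → Fml
  | or : Fml → Fml → Fml
deriving DecidableEq

namespace Fml

/-- Negation (pushed to atoms, as ¬ applies only to atoms). -/
def negate : Fml → Fml
  | pos n => neg n
  | neg n => pos n
  | and a b => or a.negate b.negate
  | or a b => and a.negate b.negate

/-- Substitution extended homomorphically. -/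
def subst (σ : ℕ → Fml) : Fml → Fml
  | pos n => σ n
  | neg n => (σ n).negate
  | and a b => and (a.subst σ) (b.subst σ)
  | or a b => or (a.subst σ) (b.subst σ)

/-- Classical evaluation under a truth assignment. -/
def eval (v : ℕ → Bool) : Fml → Bool
  | pos n => v n
  | neg n => !(v n)
  | and a b => a.eval v && b.eval v
  | or a b => a.eval v || b.eval v

/-- Number of positive occurrences of atom `a`. -/
def cPos (a : ℕ) : Fml → ℕ
  | pos n => if n = a then 1 else 0
  | neg _ => 0
  | and f g => f.cPos a + g.cPos a
  | or f g => f.cPos a + g.cPos a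

/-- Number of negative occurrences of atom `a`. -/
def cNeg (a : ℕ) : Fml → ℕ
  | pos _ => 0
  | neg n => if n = a then 1 else 0
  | and f g => f.cNeg a + g.cNeg a
  | or f g => f.cNeg a + g.cNeg a

/-- Total number of positive occurrences of atoms. -/
def posOcc : Fml → ℕ
  | pos _ => 1
  | neg _ => 0
  | and f g => f.posOcc + g.posOcc
  | or f g => f.posOcc + g.posOcc

/-- Length: total number of occurrences of literals and connectives. -/
def len : Fml → ℕ
  | pos _ => 1
  | neg _ => 1
  | and f g => f.len + g.len + 1
  | or f g => f.len + g.len + 1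

/-- Number of occurrences of ∧. -/
def nAnd : Fml → ℕ
  | pos _ => 0
  | neg _ => 0
  | and f g => f.nAnd + g.nAnd + 1
  | or f g => f.nAnd + g.nAnd

/-- Number of occurrences of ∨. -/
def nOr : Fml → ℕ
  | pos _ => 0
  | neg _ => 0
  | and f g => f.nOr + g.nOr
  | or f g => f.nOr + g.nOr + 1

end Fml

def Tautology (A : Fml) : Prop := ∀ v, A.eval v = true

/-- No atom has more than two occurrences. -/
def Binary (A : Fml) : Prop := ∀ a, A.cPos a + A.cNeg a ≤ 2

/-- Whenever an atom occurs twice, one occurrence is positive and one negative. -/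
def Normal (A : Fml) : Prop := ∀ a, A.cPos a ≤ 1 ∧ A.cNeg a ≤ 1

def AtomicLevel (σ : ℕ → Fml) : Prop := ∀ n, ∃ m, σ n = Fml.pos m

/-- `F` is an instance of `B`: σ(B) = F for some substitution σ. -/
def InstanceOf (F B : Fml) : Prop := ∃ σ, B.subst σ = F

/-- `F` is an atomic-level instance of `B`. -/
def AtomicInstanceOf (F B : Fml) : Prop := ∃ σ, AtomicLevel σ ∧ B.subst σ = F

/-- A cirquent: a pool of (occurrences of) formulas, and a list of ogroups,
each an (index-)set of oformulas of the pool. -/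
structure Cirquent where
  pool : List Fml
  groups : List (Finset ℕ)

def emptyCirquent : Cirquent := ⟨[], []⟩

def idCirquent (F : Fml) : Cirquent := ⟨[F.negate, F], [{0, 1}]⟩

/-- The cirquent with pool ⟨F⟩ and one ogroup containing F. -/
def fmlCirquent (F : Fml) : Cirquent := ⟨[F], [{0}]⟩

/-- Index renaming swapping `i` and `i+1`. -/
def swapIdx (i : ℕ) : ℕ → ℕ := fun j => if j = i then i + 1 else if j = i + 1 then i else j

/-- Index renaming when a new oformula is inserted at position `i`. -/
def insShift (i : ℕ) : ℕ → ℕ := fun j => if j < i then j else j + 1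

/-- Index renaming when the oformulas at positions `i`, `i+1` are merged into one at `i`. -/
def mergeIdx (i : ℕ) : ℕ → ℕ := fun j => if j ≤ i then j else j - 1

/-- Mix: placing the two premise cirquents side by side. -/
def MixStep (A B C : Cirquent) : Prop :=
  C.pool = A.pool ++ B.pool ∧
  C.groups = A.groups ++ B.groups.map (Finset.image (· + A.pool.length))

/-- Oformula exchange: swap two adjacent oformulas, preserving containment. -/
def OfExchStep (P C : Cirquent) : Prop :=
  ∃ (l₁ l₂ : List Fml) (F G : Fml),
    P.pool = l₁ ++ F :: G :: l₂ ∧ C.pool = l₁ ++ G :: F :: l₂ ∧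
    C.groups = P.groups.map (Finset.image (swapIdx l₁.length))

/-- Ogroup exchange: swap two adjacent ogroups. -/
def OgExchStep (P C : Cirquent) : Prop :=
  C.pool = P.pool ∧
  ∃ (g₁ g₂ : List (Finset ℕ)) (Γ Δ : Finset ℕ),
    P.groups = g₁ ++ Γ :: Δ :: g₂ ∧ C.groups = g₁ ++ Δ :: Γ :: g₂

/-- Pool weakening: insert a new oformula, contained in no ogroup. -/
def PoolWeakStep (P C : Cirquent) : Prop :=
  ∃ (l₁ l₂ : List Fml) (F : Fml),
    P.pool = l₁ ++ l₂ ∧ C.pool = l₁ ++ F :: l₂ ∧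
    C.groups = P.groups.map (Finset.image (insShift l₁.length))

/-- Ogroup weakening: add a new arc between a pre-existing ogroup and oformula. -/
def OgWeakStep (P C : Cirquent) : Prop :=
  C.pool = P.pool ∧
  ∃ (g₁ g₂ : List (Finset ℕ)) (Γ : Finset ℕ) (j : ℕ),
    j < P.pool.length ∧ j ∉ Γ ∧
    P.groups = g₁ ++ Γ :: g₂ ∧ C.groups = g₁ ++ insert j Γ :: g₂

/-- Downward duplication: replace an ogroup by two adjacent copies of it. -/
def DupDownStep (P C : Cirquent) : Prop :=
  C.pool = P.pool ∧
  ∃ (g₁ g₂ : List (Finset ℕ)) (Γ : Finset ℕ),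
    P.groups = g₁ ++ Γ :: g₂ ∧ C.groups = g₁ ++ Γ :: Γ :: g₂

/-- Upward duplication: the converse of downward duplication. -/
def DupUpStep (P C : Cirquent) : Prop :=
  C.pool = P.pool ∧
  ∃ (g₁ g₂ : List (Finset ℕ)) (Γ : Finset ℕ),
    P.groups = g₁ ++ Γ :: Γ :: g₂ ∧ C.groups = g₁ ++ Γ :: g₂

/-- ∨-introduction: merge two adjacent oformulas F, G into F ∨ G. -/
def OrIntroStep (P C : Cirquent) : Prop :=
  ∃ (l₁ l₂ : List Fml) (F G : Fml),
    P.pool = l₁ ++ F :: G :: l₂ ∧ C.pool = l₁ ++ (Fml.or F G) :: l₂ ∧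
    C.groups = P.groups.map (Finset.image (mergeIdx l₁.length))

/-- The merging of the ogroup list in ∧-introduction: no ogroup contains both `i`
and `i+1`; every ogroup containing `i` is immediately followed by one containing
`i+1` and vice versa; such pairs are merged. -/
inductive AndMerge (i : ℕ) : List (Finset ℕ) → List (Finset ℕ) → Prop where
  | nil : AndMerge i [] []
  | skip {Γ : Finset ℕ} {l l' : List (Finset ℕ)} :
      i ∉ Γ → (i + 1) ∉ Γ → AndMerge i l l' → AndMerge i (Γ :: l) (Γ :: l')
  | merge {Γ Δ : Finset ℕ} {l l' : List (Finset ℕ)} :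
      i ∈ Γ → (i + 1) ∉ Γ → (i + 1) ∈ Δ → i ∉ Δ →
      AndMerge i l l' → AndMerge i (Γ :: Δ :: l) ((Γ ∪ Δ) :: l')

/-- ∧-introduction. -/
def AndIntroStep (P C : Cirquent) : Prop :=
  ∃ (l₁ l₂ : List Fml) (F G : Fml) (merged : List (Finset ℕ)),
    P.pool = l₁ ++ F :: G :: l₂ ∧ C.pool = l₁ ++ (Fml.and F G) :: l₂ ∧
    AndMerge l₁.length P.groups merged ∧
    C.groups = merged.map (Finset.image (mergeIdx l₁.length))

inductive RuleName where
  | emptyAx | idAx | mix | ofExch | ogExch | poolWeak | ogWeak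
  | dupDown | dupUp | orIntro | andIntro
deriving DecidableEq

/-- The unary (one-premise) rules, by name. -/
def unRel : RuleName → Cirquent → Cirquent → Prop
  | .ofExch => OfExchStep
  | .ogExch => OgExchStep
  | .poolWeak => PoolWeakStep
  | .ogWeak => OgWeakStep
  | .dupDown => DupDownStep
  | .dupUp => DupUpStep
  | .orIntro => OrIntroStep
  | .andIntro => AndIntroStep
  | _ => fun _ _ => False

/-- Proof trees: each node is labeled by its cirquent and the rule used. -/
inductive PTree where
  | leaf (C : Cirquent) (r : RuleName)
  | un (C : Cirquent) (r : RuleName) (p : PTree)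
  | bin (C : Cirquent) (r : RuleName) (p q : PTree)

namespace PTree

def concl : PTree → Cirquent
  | leaf C _ => C
  | un C _ _ => C
  | bin C _ _ _ => C

/-- Validity: each node follows from its children by the named rule. -/
def Valid : PTree → Prop
  | leaf C r =>
      (r = .emptyAx ∧ C = emptyCirquent) ∨ (r = .idAx ∧ ∃ F, C = idCirquent F)
  | un C r p => p.Valid ∧ unRel r p.concl C
  | bin C r p q => p.Valid ∧ q.Valid ∧ r = .mix ∧ MixStep p.concl q.concl C

/-- Number of applications of rule `r` in the proof. -/
def count (r : RuleName) : PTree → ℕ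
  | leaf _ r' => if r' = r then 1 else 0
  | un _ r' p => (if r' = r then 1 else 0) + p.count r
  | bin _ r' p q => (if r' = r then 1 else 0) + p.count r + q.count r

/-- The cirquents occurring in the proof. -/
def cirquents : PTree → List Cirquent
  | leaf C _ => [C]
  | un C _ p => C :: p.cirquents
  | bin C _ p q => C :: (p.cirquents ++ q.cirquents)

/-- Total number of rule applications (nodes). -/
def nodes : PTree → ℕ
  | leaf _ _ => 1
  | un _ _ p => p.nodes + 1
  | bin _ _ p q => p.nodes + q.nodes + 1

/-- Number of leaves of the proof tree. -/
def leavesCount : PTree → ℕ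
  | leaf _ _ => 1
  | un _ _ p => p.leavesCount
  | bin _ _ p q => p.leavesCount + q.leavesCount

end PTree

/-- A proof uses no duplication. -/
def DupFree (p : PTree) : Prop :=
  p.count RuleName.dupDown = 0 ∧ p.count RuleName.dupUp = 0

/-- Provability of a cirquent in CL5. -/
def ProvesC (C : Cirquent) : Prop := ∃ p : PTree, p.Valid ∧ p.concl = C

/-- Provability of a formula in CL5. -/
def ProvesCL5 (F : Fml) : Prop := ∃ p : PTree, p.Valid ∧ p.concl = fmlCirquent F

/-- Provability of a formula in CL5⁻ (CL5 without duplication). -/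
def ProvesCL5m (F : Fml) : Prop :=
  ∃ p : PTree, p.Valid ∧ DupFree p ∧ p.concl = fmlCirquent F

/-- Number of arcs of a cirquent (sum of the sizes of its ogroups). -/
def Cirquent.arcs (C : Cirquent) : ℕ := (C.groups.map Finset.card).sum

/-- Size of a cirquent: sum of the lengths of the oformulas in its pool plus
the sum of the sizes of its ogroups. -/
def Cirquent.size (C : Cirquent) : ℕ := (C.pool.map Fml.len).sum + C.arcs

/-- Size of a proof: the sum of the sizes of the cirquents it contains. -/
def PTree.size (p : PTree) : ℕ := (p.cirquents.map Cirquent.size).sum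

/-- Total number of positive occurrences of atoms in the pool. -/
def Cirquent.poolPosOcc (C : Cirquent) : ℕ := (C.pool.map Fml.posOcc).sum

end CirquentCalc

open CirquentCalc


namespace CirquentCalc

instance : Inhabited Fml := ⟨Fml.pos 0⟩

lemma Fml.one_le_len (F : Fml) : 1 ≤ F.len := by
  induction F <;> simp [Fml.len] <;> omega

/-- Sum of lengths of pool formulas. -/
def Cirquent.plen (C : Cirquent) : ℕ := (C.pool.map Fml.len).sum

/-- Structural sanity of a cirquent: every ogroup is nonempty with members
that are indices into the pool. -/
def Good (C : Cirquent) : Prop :=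
  ∀ g ∈ C.groups, g.Nonempty ∧ ∀ j ∈ g, j < C.pool.length

lemma pcount_le_plen (C : Cirquent) : C.pool.length ≤ C.plen := by
  unfold Cirquent.plen
  induction C.pool with
  | nil => simp
  | cons a l ih => simp only [List.map_cons, List.sum_cons, List.length_cons]
                   have := Fml.one_le_len a; omega

lemma len_sum_middle (l₁ l₂ : List Fml) (F G : Fml) :
    ((l₁ ++ F :: G :: l₂).map Fml.len).sum
      = ((l₁ ++ G :: F :: l₂).map Fml.len).sum := by
  simp [List.map_append, List.sum_append]; ring

/-! ### Injectivity of index renamings -/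

lemma swapIdx_inj (i : ℕ) : Function.Injective (swapIdx i) := by
  intro a b h; unfold swapIdx at h; split_ifs at h <;> omega

lemma insShift_inj (i : ℕ) : Function.Injective (insShift i) := by
  intro a b h; unfold insShift at h; split_ifs at h <;> omega

lemma swapIdx_swapIdx (i j : ℕ) : swapIdx i (swapIdx i j) = j := by
  unfold swapIdx; split_ifs <;> omega

lemma arcs_map_of_inj {f : ℕ → ℕ} (hf : Function.Injective f)
    (l : List (Finset ℕ)) :
    ((l.map (Finset.image f)).map Finset.card).sum = (l.map Finset.card).sum := by
  induction l with
  | nil => simp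
  | cons g l ih =>
    simp only [List.map_cons, List.sum_cons]
    rw [Finset.card_image_of_injective g hf, ih]

lemma card_image_mergeIdx (i : ℕ) (g : Finset ℕ) :
    g.card ≤ (g.image (mergeIdx i)).card + 1 := by
  have h1 : ((g.erase (i+1)).image (mergeIdx i)).card = (g.erase (i+1)).card := by
    apply Finset.card_image_of_injOn
    intro a ha b hb h
    have ha' : a ≠ i + 1 := Finset.ne_of_mem_erase ha
    have hb' : b ≠ i + 1 := Finset.ne_of_mem_erase hb
    unfold mergeIdx at h; split_ifs at h <;> omega
  have h2 : ((g.erase (i+1)).image (mergeIdx i)).card ≤ (g.image (mergeIdx i)).card :=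
    Finset.card_le_card (Finset.image_subset_image (Finset.erase_subset _ _))
  have h3 : g.card ≤ (g.erase (i+1)).card + 1 := by
    by_cases h : (i+1) ∈ g
    · rw [Finset.card_erase_of_mem h]; omega
    · rw [Finset.erase_eq_of_notMem h]; omega
  omega

/-! ### Per-rule facts -/

lemma mix_plen {A B C : Cirquent} (h : MixStep A B C) :
    C.plen = A.plen + B.plen ∧ C.pool.length = A.pool.length + B.pool.length ∧
    C.groups.length = A.groups.length + B.groups.length ∧
    C.arcs = A.arcs + B.arcs := by
  obtain ⟨hp, hg⟩ := h
  refine ⟨?_, ?_, ?_, ?_⟩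
  · simp [Cirquent.plen, hp]
  · simp [hp]
  · simp [hg]
  · simp only [Cirquent.arcs, hg, List.map_append, List.sum_append]
    rw [arcs_map_of_inj (add_left_injective A.pool.length)]

lemma mix_good {A B C : Cirquent} (h : MixStep A B C) (hA : Good A) (hB : Good B) :
    Good C := by
  obtain ⟨hp, hg⟩ := h
  intro g hgmem
  rw [hg, List.mem_append] at hgmem
  rcases hgmem with hm | hm
  · obtain ⟨hne, hbd⟩ := hA g hm
    exact ⟨hne, fun j hj => by rw [hp]; simp only [List.length_append]; have := hbd j hj; omega⟩
  · rw [List.mem_map] at hm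
    obtain ⟨g₀, hg₀, rfl⟩ := hm
    obtain ⟨hne, hbd⟩ := hB g₀ hg₀
    constructor
    · exact hne.image _
    · intro j hj
      rw [Finset.mem_image] at hj
      obtain ⟨a, ha, rfl⟩ := hj
      have := hbd a ha; rw [hp]; simp only [List.length_append]; omega

lemma ofExch_facts {P C : Cirquent} (h : OfExchStep P C) :
    C.plen = P.plen ∧ C.pool.length = P.pool.length ∧
    C.groups.length = P.groups.length ∧ C.arcs = P.arcs := by
  obtain ⟨l₁, l₂, F, G, hP, hC, hg⟩ := h
  refine ⟨?_, ?_, ?_, ?_⟩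
  · rw [Cirquent.plen, Cirquent.plen, hP, hC, len_sum_middle]
  · rw [hP, hC]; simp
  · rw [hg]; simp
  · rw [Cirquent.arcs, Cirquent.arcs, hg, arcs_map_of_inj (swapIdx_inj _)]

lemma ofExch_good {P C : Cirquent} (h : OfExchStep P C) (hP : Good P) : Good C := by
  obtain ⟨l₁, l₂, F, G, hPp, hCp, hg⟩ := h
  intro g hgmem
  rw [hg, List.mem_map] at hgmem
  obtain ⟨g₀, hg₀, rfl⟩ := hgmem
  obtain ⟨hne, hbd⟩ := hP g₀ hg₀
  refine ⟨hne.image _, ?_⟩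
  intro j hj
  rw [Finset.mem_image] at hj
  obtain ⟨a, ha, rfl⟩ := hj
  have := hbd a ha
  rw [hPp] at this; rw [hCp]
  simp only [List.length_append, List.length_cons] at this ⊢
  unfold swapIdx; split_ifs <;> omega

lemma ogExch_facts {P C : Cirquent} (h : OgExchStep P C) :
    C.pool = P.pool ∧ C.groups.length = P.groups.length ∧ C.arcs = P.arcs := by
  obtain ⟨hp, g₁, g₂, Γ, Δ, hP, hC⟩ := h
  refine ⟨hp, ?_, ?_⟩
  · rw [hP, hC]; simp
  · rw [Cirquent.arcs, Cirquent.arcs, hP, hC]; simp; ring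

lemma ogExch_good {P C : Cirquent} (h : OgExchStep P C) (hP : Good P) : Good C := by
  obtain ⟨hp, g₁, g₂, Γ, Δ, hPg, hCg⟩ := h
  intro g hgmem
  have : g ∈ P.groups := by
    rw [hPg]; rw [hCg] at hgmem
    simp only [List.mem_append, List.mem_cons] at hgmem ⊢; tauto
  obtain ⟨hne, hbd⟩ := hP g this
  exact ⟨hne, fun j hj => by rw [hp]; exact hbd j hj⟩

lemma poolWeak_facts {P C : Cirquent} (h : PoolWeakStep P C) :
    P.plen + 1 ≤ C.plen ∧ C.pool.length = P.pool.length + 1 ∧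
    C.groups.length = P.groups.length ∧ C.arcs = P.arcs := by
  obtain ⟨l₁, l₂, F, hP, hC, hg⟩ := h
  refine ⟨?_, ?_, ?_, ?_⟩
  · rw [Cirquent.plen, Cirquent.plen, hP, hC]
    simp only [List.map_append, List.sum_append, List.map_cons, List.sum_cons]
    have := F.one_le_len; omega
  · rw [hP, hC]; simp; omega
  · rw [hg]; simp
  · rw [Cirquent.arcs, Cirquent.arcs, hg, arcs_map_of_inj (insShift_inj _)]

lemma poolWeak_good {P C : Cirquent} (h : PoolWeakStep P C) (hP : Good P) : Good C := by
  obtain ⟨l₁, l₂, F, hPp, hCp, hg⟩ := h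
  intro g hgmem
  rw [hg, List.mem_map] at hgmem
  obtain ⟨g₀, hg₀, rfl⟩ := hgmem
  obtain ⟨hne, hbd⟩ := hP g₀ hg₀
  refine ⟨hne.image _, ?_⟩
  intro j hj
  rw [Finset.mem_image] at hj
  obtain ⟨a, ha, rfl⟩ := hj
  have := hbd a ha
  rw [hPp] at this; rw [hCp]
  simp only [List.length_append, List.length_cons] at this ⊢
  unfold insShift; split_ifs <;> omega

lemma ogWeak_facts {P C : Cirquent} (h : OgWeakStep P C) :
    C.pool = P.pool ∧ C.groups.length = P.groups.length ∧ C.arcs = P.arcs + 1 := by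
  obtain ⟨hp, g₁, g₂, Γ, j, hjlen, hjΓ, hP, hC⟩ := h
  refine ⟨hp, ?_, ?_⟩
  · rw [hP, hC]; simp
  · rw [Cirquent.arcs, Cirquent.arcs, hP, hC]
    simp only [List.map_append, List.map_cons, List.sum_append, List.sum_cons]
    rw [Finset.card_insert_of_notMem hjΓ]; ring

lemma ogWeak_good {P C : Cirquent} (h : OgWeakStep P C) (hP : Good P) : Good C := by
  obtain ⟨hp, g₁, g₂, Γ, j, hjlen, hjΓ, hPg, hCg⟩ := h
  intro g hgmem
  rw [hCg] at hgmem
  simp only [List.mem_append, List.mem_cons] at hgmem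
  rcases hgmem with hm | hm | hm
  · obtain ⟨hne, hbd⟩ := hP g (by rw [hPg]; simp [hm])
    exact ⟨hne, fun a ha => by rw [hp]; exact hbd a ha⟩
  · subst hm
    obtain ⟨hne, hbd⟩ := hP Γ (by rw [hPg]; simp)
    refine ⟨Finset.insert_nonempty _ _, ?_⟩
    intro a ha
    rw [Finset.mem_insert] at ha
    rw [hp]
    rcases ha with rfl | ha
    · exact hjlen
    · exact hbd a ha
  · obtain ⟨hne, hbd⟩ := hP g (by rw [hPg]; simp [hm])
    exact ⟨hne, fun a ha => by rw [hp]; exact hbd a ha⟩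

lemma orIntro_facts {P C : Cirquent} (h : OrIntroStep P C) :
    C.plen = P.plen + 1 ∧ P.pool.length = C.pool.length + 1 ∧
    C.groups.length = P.groups.length ∧
    P.arcs ≤ C.arcs + P.groups.length := by
  obtain ⟨l₁, l₂, F, G, hP, hC, hg⟩ := h
  refine ⟨?_, ?_, ?_, ?_⟩
  · rw [Cirquent.plen, Cirquent.plen, hP, hC]
    simp [Fml.len]; ring
  · rw [hP, hC]; simp; omega
  · rw [hg]; simp
  · rw [Cirquent.arcs, Cirquent.arcs, hg]
    induction P.groups with
    | nil => simp
    | cons g l ih =>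
      simp only [List.map_cons, List.sum_cons, List.length_cons]
      have := card_image_mergeIdx l₁.length g
      omega

lemma mergeIdx_lt {i n j : ℕ} (hi : i + 1 < n) (hj : j < n) : mergeIdx i j < n - 1 := by
  unfold mergeIdx; split_ifs <;> omega

lemma orIntro_good {P C : Cirquent} (h : OrIntroStep P C) (hP : Good P) : Good C := by
  obtain ⟨l₁, l₂, F, G, hPp, hCp, hg⟩ := h
  intro g hgmem
  rw [hg, List.mem_map] at hgmem
  obtain ⟨g₀, hg₀, rfl⟩ := hgmem
  obtain ⟨hne, hbd⟩ := hP g₀ hg₀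
  refine ⟨hne.image _, ?_⟩
  intro j hj
  rw [Finset.mem_image] at hj
  obtain ⟨a, ha, rfl⟩ := hj
  have h1 := hbd a ha
  have hC : C.pool.length = P.pool.length - 1 := by rw [hPp, hCp]; simp
  have hi : l₁.length + 1 < P.pool.length := by rw [hPp]; simp
  rw [hC]
  exact mergeIdx_lt hi h1

/-! ### AndMerge facts -/

lemma andMerge_length {i : ℕ} {l l' : List (Finset ℕ)} (h : AndMerge i l l') :
    l'.length ≤ l.length := by
  induction h with
  | nil => simp
  | skip _ _ _ ih => simpa using Nat.succ_le_succ ih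
  | merge _ _ _ _ _ ih => simp at *; omega

lemma andMerge_card {i : ℕ} {l l' : List (Finset ℕ)} (h : AndMerge i l l')
    {K : ℕ} (hK : ∀ g ∈ l, g.card ≤ K) :
    (l.map Finset.card).sum ≤ (l'.map Finset.card).sum + K * l'.length := by
  induction h with
  | nil => simp
  | @skip Γ l l' _ _ _ ih =>
    simp only [List.map_cons, List.sum_cons, List.length_cons]
    have hsub := ih (fun g hg => hK g (by simp [hg]))
    nlinarith
  | @merge Γ Δ l l' hΓ _ hΔ _ _ ih =>
    simp only [List.map_cons, List.sum_cons, List.length_cons]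
    have hsub := ih (fun g hg => hK g (by simp [hg]))
    have h1 : Γ.card + Δ.card ≤ (Γ ∪ Δ).card + Δ.card := by
      have : Γ ⊆ Γ ∪ Δ := Finset.subset_union_left
      have := Finset.card_le_card this; omega
    have h2 : Δ.card ≤ K := hK Δ (by simp)
    nlinarith

lemma andMerge_mem {i : ℕ} {l l' : List (Finset ℕ)} (h : AndMerge i l l')
    {Q : Finset ℕ → Prop} (hQ : ∀ g₁ g₂, Q g₁ → Q g₂ → Q (g₁ ∪ g₂))
    (hl : ∀ g ∈ l, Q g) : ∀ g ∈ l', Q g := by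
  induction h with
  | nil => simp
  | skip _ _ _ ih =>
    intro g hg
    rw [List.mem_cons] at hg
    rcases hg with rfl | hg
    · exact hl g (by simp)
    · exact ih (fun g' hg' => hl g' (by simp [hg'])) g hg
  | merge _ _ _ _ _ ih =>
    intro g hg
    rw [List.mem_cons] at hg
    rcases hg with rfl | hg
    · exact hQ _ _ (hl _ (by simp)) (hl _ (by simp [List.mem_cons]))
    · exact ih (fun g' hg' => hl g' (by simp [hg'])) g hg

lemma andIntro_facts {P C : Cirquent} (h : AndIntroStep P C) (hGood : Good P) :
    C.plen = P.plen + 1 ∧ P.pool.length = C.pool.length + 1 ∧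
    C.groups.length ≤ P.groups.length ∧
    P.arcs ≤ C.arcs + P.pool.length * P.groups.length + P.groups.length := by
  obtain ⟨l₁, l₂, F, G, merged, hP, hC, hm, hg⟩ := h
  refine ⟨?_, ?_, ?_, ?_⟩
  · rw [Cirquent.plen, Cirquent.plen, hP, hC]
    simp [Fml.len]; ring
  · rw [hP, hC]; simp; omega
  · rw [hg]; simpa using andMerge_length hm
  · have hK : ∀ g ∈ P.groups, g.card ≤ P.pool.length := by
      intro g hgm
      obtain ⟨-, hbd⟩ := hGood g hgm
      calc g.card ≤ (Finset.range P.pool.length).card :=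
            Finset.card_le_card (fun j hj => Finset.mem_range.mpr (hbd j hj))
        _ = P.pool.length := Finset.card_range _
    have h1 := andMerge_card hm hK
    have h2 : (merged.map Finset.card).sum ≤
        ((merged.map (Finset.image (mergeIdx l₁.length))).map Finset.card).sum
          + merged.length := by
      clear h1 hm hg
      induction merged with
      | nil => simp
      | cons g l ih =>
        simp only [List.map_cons, List.sum_cons, List.length_cons]
        have := card_image_mergeIdx l₁.length g
        omega
    have h3 : merged.length ≤ P.groups.length := andMerge_length hm
    have h4 : C.arcs
        = ((merged.map (Finset.image (mergeIdx l₁.length))).map Finset.card).sum := by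
      rw [Cirquent.arcs, hg]
    rw [Cirquent.arcs]
    nlinarith

lemma andIntro_good {P C : Cirquent} (h : AndIntroStep P C) (hP : Good P) : Good C := by
  obtain ⟨l₁, l₂, F, G, merged, hPp, hCp, hm, hg⟩ := h
  have hmerged : ∀ g ∈ merged, g.Nonempty ∧ ∀ j ∈ g, j < P.pool.length := by
    apply andMerge_mem (Q := fun g => g.Nonempty ∧ ∀ j ∈ g, j < P.pool.length) hm
    · rintro g₁ g₂ ⟨h1, h2⟩ ⟨h3, h4⟩
      refine ⟨h1.mono Finset.subset_union_left, ?_⟩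
      intro j hj
      rw [Finset.mem_union] at hj
      rcases hj with hj | hj
      · exact h2 j hj
      · exact h4 j hj
    · exact hP
  intro g hgmem
  rw [hg, List.mem_map] at hgmem
  obtain ⟨g₀, hg₀, rfl⟩ := hgmem
  obtain ⟨hne, hbd⟩ := hmerged g₀ hg₀
  refine ⟨hne.image _, ?_⟩
  intro j hj
  rw [Finset.mem_image] at hj
  obtain ⟨a, ha, rfl⟩ := hj
  have h1 := hbd a ha
  have hC : C.pool.length = P.pool.length - 1 := by rw [hPp, hCp]; simp
  have hi : l₁.length + 1 < P.pool.length := by rw [hPp]; simp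
  rw [hC]
  exact mergeIdx_lt hi h1

/-! ### Axiom facts -/

lemma emptyCirquent_plen : emptyCirquent.plen = 0 := rfl

lemma emptyCirquent_good : Good emptyCirquent := by
  intro g hg; simp [emptyCirquent] at hg

lemma idCirquent_facts (F : Fml) :
    (idCirquent F).plen = F.negate.len + F.len ∧ (idCirquent F).pool.length = 2 ∧
    (idCirquent F).groups.length = 1 ∧ (idCirquent F).arcs = 2 := by
  refine ⟨by simp [idCirquent, Cirquent.plen], by simp [idCirquent], by simp [idCirquent], ?_⟩
  simp [idCirquent, Cirquent.arcs]

lemma idCirquent_good (F : Fml) : Good (idCirquent F) := by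
  intro g hg
  simp only [idCirquent, List.mem_cons, List.not_mem_nil, or_false] at hg
  subst hg
  constructor
  · exact ⟨0, by simp⟩
  · intro j hj
    simp only [Finset.mem_insert, Finset.mem_singleton] at hj
    simp only [idCirquent, List.length_cons, List.length_nil]
    omega

/-! ### DupFree structural lemmas -/

lemma DupFree.un' {C r q} (h : DupFree (PTree.un C r q)) :
    DupFree q ∧ r ≠ RuleName.dupDown ∧ r ≠ RuleName.dupUp := by
  obtain ⟨h1, h2⟩ := h
  simp only [PTree.count] at h1 h2
  refine ⟨⟨by omega, by omega⟩, ?_, ?_⟩ <;>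
    · rintro rfl; simp at h1 h2

lemma DupFree.bin' {C r q₁ q₂} (h : DupFree (PTree.bin C r q₁ q₂)) :
    DupFree q₁ ∧ DupFree q₂ := by
  obtain ⟨h1, h2⟩ := h
  simp only [PTree.count] at h1 h2
  exact ⟨⟨by omega, by omega⟩, ⟨by omega, by omega⟩⟩

/-! ### Good everywhere -/

lemma valid_good : ∀ p : PTree, p.Valid → DupFree p → Good p.concl := by
  intro p
  induction p with
  | leaf C r =>
    rintro (⟨-, rfl⟩ | ⟨-, F, rfl⟩) -
    · exact emptyCirquent_good
    · exact idCirquent_good F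
  | un C r q ih =>
    rintro ⟨hq, hr⟩ hdf
    obtain ⟨hdfq, hd1, hd2⟩ := hdf.un'
    have hgood := ih hq hdfq
    cases r <;> simp only [unRel] at hr
    · exact ofExch_good hr hgood
    · exact ogExch_good hr hgood
    · exact poolWeak_good hr hgood
    · exact ogWeak_good hr hgood
    · exact absurd rfl hd1
    · exact absurd rfl hd2
    · exact orIntro_good hr hgood
    · exact andIntro_good hr hgood
  | bin C r q₁ q₂ ih₁ ih₂ =>
    rintro ⟨h1, h2, rfl, hmix⟩ hdf
    obtain ⟨hdf1, hdf2⟩ := hdf.bin'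
    exact mix_good hmix (ih₁ h1 hdf1) (ih₂ h2 hdf2)

/-! ### Counting lemmas -/

lemma plen_of_pool_eq {P C : Cirquent} (h : C.pool = P.pool) : C.plen = P.plen := by
  rw [Cirquent.plen, Cirquent.plen, h]

lemma step_plen_le {P C : Cirquent} {r : RuleName} (hr : unRel r P C) :
    P.plen ≤ C.plen := by
  cases r <;> simp only [unRel] at hr
  · exact le_of_eq (ofExch_facts hr).1.symm
  · exact le_of_eq (plen_of_pool_eq (ogExch_facts hr).1).symm
  · have := (poolWeak_facts hr).1; omega
  · exact le_of_eq (plen_of_pool_eq (ogWeak_facts hr).1).symm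
  · exact le_of_eq (plen_of_pool_eq hr.1).symm
  · exact le_of_eq (plen_of_pool_eq hr.1).symm
  · have := (orIntro_facts hr).1; omega
  · obtain ⟨l₁, l₂, F, G, merged, hP, hC, hm, hg⟩ := hr
    have : C.plen = P.plen + 1 := by
      rw [Cirquent.plen, Cirquent.plen, hP, hC]; simp [Fml.len]; ring
    omega

lemma count_a : ∀ p : PTree, p.Valid → DupFree p →
    2 * p.count .idAx + p.count .poolWeak + p.count .orIntro + p.count .andIntro
      ≤ p.concl.plen := by
  intro p
  induction p with
  | leaf C r =>
    rintro (⟨rfl, rfl⟩ | ⟨rfl, F, rfl⟩) -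
    · simp [PTree.count, PTree.concl, emptyCirquent_plen]
    · have h0 := (idCirquent_facts F).1
      have h1 := F.negate.one_le_len; have h2 := F.one_le_len
      simp only [PTree.count, PTree.concl]
      simp only [h0]
      simp only [reduceCtorEq, reduceIte, ite_true, ite_false, zero_add, add_zero] at *
      omega
  | un C r q ih =>
    rintro ⟨hq, hr⟩ hdf
    obtain ⟨hdfq, hd1, hd2⟩ := hdf.un'
    have IH := ih hq hdfq
    cases r <;> simp only [unRel] at hr <;> simp only [PTree.count] at * <;>
      simp only [PTree.concl] <;>
      simp only [reduceCtorEq, reduceIte, ite_true, ite_false, zero_add, add_zero] at *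
    · have := (ofExch_facts hr).1; omega
    · have := plen_of_pool_eq (ogExch_facts hr).1; omega
    · have := (poolWeak_facts hr).1; omega
    · have := plen_of_pool_eq (ogWeak_facts hr).1; omega
    · exact absurd rfl hd1
    · exact absurd rfl hd2
    · have := (orIntro_facts hr).1; omega
    · obtain ⟨l₁, l₂, F, G, merged, hP, hC, hm, hg⟩ := hr
      have : C.plen = q.concl.plen + 1 := by
        rw [Cirquent.plen, Cirquent.plen, hP, hC]; simp [Fml.len]; ring
      omega
  | bin C r q₁ q₂ ih₁ ih₂ =>
    rintro ⟨h1, h2, rfl, hmix⟩ hdf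
    obtain ⟨hdf1, hdf2⟩ := hdf.bin'
    have IH1 := ih₁ h1 hdf1
    have IH2 := ih₂ h2 hdf2
    have := (mix_plen hmix).1
    simp only [PTree.count] at *
    simp only [PTree.concl]
    simp only [reduceCtorEq, reduceIte, ite_true, ite_false, zero_add, add_zero] at *
    omega

lemma count_b : ∀ p : PTree, p.Valid → DupFree p →
    p.concl.groups.length ≤ p.count .idAx := by
  intro p
  induction p with
  | leaf C r =>
    rintro (⟨rfl, rfl⟩ | ⟨rfl, F, rfl⟩) -
    · simp [PTree.count, PTree.concl, emptyCirquent]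
    · have h0 := (idCirquent_facts F).2.2.1
      simp only [PTree.count, PTree.concl]
      simp [h0]
  | un C r q ih =>
    rintro ⟨hq, hr⟩ hdf
    obtain ⟨hdfq, hd1, hd2⟩ := hdf.un'
    have IH := ih hq hdfq
    cases r <;> simp only [unRel] at hr <;> simp only [PTree.count] at * <;>
      simp only [PTree.concl] <;>
      simp only [reduceCtorEq, reduceIte, ite_true, ite_false, zero_add, add_zero] at *
    · have := (ofExch_facts hr).2.2.1; omega
    · have := (ogExch_facts hr).2.1; omega
    · have := (poolWeak_facts hr).2.2.1; omega
    · have := (ogWeak_facts hr).2.1; omega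
    · exact absurd rfl hd1
    · exact absurd rfl hd2
    · have := (orIntro_facts hr).2.2.1; omega
    · obtain ⟨l₁, l₂, F, G, merged, hP, hC, hm, hg⟩ := hr
      have h5 : C.groups.length ≤ q.concl.groups.length := by
        rw [hg]; simpa using andMerge_length hm
      omega
  | bin C r q₁ q₂ ih₁ ih₂ =>
    rintro ⟨h1, h2, rfl, hmix⟩ hdf
    obtain ⟨hdf1, hdf2⟩ := hdf.bin'
    have IH1 := ih₁ h1 hdf1
    have IH2 := ih₂ h2 hdf2
    have := (mix_plen hmix).2.2.1
    simp only [PTree.count] at *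
    simp only [PTree.concl]
    simp only [reduceCtorEq, reduceIte, ite_true, ite_false, zero_add, add_zero] at *
    omega

lemma count_c (N : ℕ) : ∀ p : PTree, p.Valid → DupFree p → p.concl.plen ≤ N →
    p.count .ogWeak + 2 * p.count .idAx
      ≤ p.concl.arcs + (N * N + 2 * N) * (p.count .orIntro + p.count .andIntro) := by
  intro p
  induction p with
  | leaf C r =>
    rintro (⟨rfl, rfl⟩ | ⟨rfl, F, rfl⟩) - -
    · simp [PTree.count, PTree.concl, emptyCirquent, Cirquent.arcs]
    · have h0 := (idCirquent_facts F).2.2.2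
      simp only [PTree.count, PTree.concl]
      simp [h0]
  | un C r q ih =>
    rintro ⟨hq, hr⟩ hdf hN
    obtain ⟨hdfq, hd1, hd2⟩ := hdf.un'
    have hNq : q.concl.plen ≤ N := le_trans (step_plen_le hr) hN
    have IH := ih hq hdfq hNq
    have hgcount : q.concl.groups.length ≤ N := by
      have hb := count_b q hq hdfq
      have ha := count_a q hq hdfq
      omega
    have hpcount : q.concl.pool.length ≤ N := le_trans (pcount_le_plen _) hNq
    have hgoodq := valid_good q hq hdfq
    cases r <;> simp only [unRel] at hr <;> simp only [PTree.count] at * <;>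
      simp only [PTree.concl] <;>
      simp only [reduceCtorEq, reduceIte, ite_true, ite_false, zero_add, add_zero] at *
    · have := (ofExch_facts hr).2.2.2; omega
    · have := (ogExch_facts hr).2.2; omega
    · have := (poolWeak_facts hr).2.2.2; omega
    · have := (ogWeak_facts hr).2.2; omega
    · exact absurd rfl hd1
    · exact absurd rfl hd2
    · have h5 := (orIntro_facts hr).2.2.2
      nlinarith
    · have h5 := (andIntro_facts hr hgoodq).2.2.2
      nlinarith
  | bin C r q₁ q₂ ih₁ ih₂ =>
    rintro ⟨h1, h2, rfl, hmix⟩ hdf hN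
    obtain ⟨hdf1, hdf2⟩ := hdf.bin'
    have hplen := (mix_plen hmix).1
    have harcs := (mix_plen hmix).2.2.2
    have hN' : C.plen ≤ N := hN
    have IH1 := ih₁ h1 hdf1 (by omega)
    have IH2 := ih₂ h2 hdf2 (by omega)
    simp only [PTree.count] at *
    simp only [PTree.concl]
    simp only [reduceCtorEq, reduceIte, ite_true, ite_false, zero_add, add_zero] at *
    nlinarith

lemma concl_empty_of_no_create : ∀ p : PTree, p.Valid → DupFree p →
    p.count .idAx = 0 → p.count .poolWeak = 0 → p.concl = emptyCirquent := by
  intro p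
  induction p with
  | leaf C r =>
    rintro (⟨rfl, rfl⟩ | ⟨rfl, F, rfl⟩) - h1 h2
    · rfl
    · simp [PTree.count] at h1
  | un C r q ih =>
    rintro ⟨hq, hr⟩ hdf h1 h2
    obtain ⟨hdfq, hd1, hd2⟩ := hdf.un'
    simp only [PTree.count] at h1 h2
    have hqe : q.concl = emptyCirquent := by
      apply ih hq hdfq <;> omega
    cases r <;> simp only [unRel] at hr
    · obtain ⟨l₁, l₂, F, G, hP, -, -⟩ := hr
      rw [hqe] at hP
      exact absurd (congrArg List.length hP) (by simp [emptyCirquent])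
    · obtain ⟨-, g₁, g₂, Γ, Δ, hP, -⟩ := hr
      rw [hqe] at hP
      exact absurd (congrArg List.length hP) (by simp [emptyCirquent])
    · simp at h2
    · obtain ⟨-, g₁, g₂, Γ, j, -, -, hP, -⟩ := hr
      rw [hqe] at hP
      exact absurd (congrArg List.length hP) (by simp [emptyCirquent])
    · exact absurd rfl hd1
    · exact absurd rfl hd2
    · obtain ⟨l₁, l₂, F, G, hP, -, -⟩ := hr
      rw [hqe] at hP
      exact absurd (congrArg List.length hP) (by simp [emptyCirquent])
    · obtain ⟨l₁, l₂, F, G, merged, hP, -, -, -⟩ := hr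
      rw [hqe] at hP
      exact absurd (congrArg List.length hP) (by simp [emptyCirquent])
  | bin C r q₁ q₂ ih₁ ih₂ =>
    rintro ⟨h1, h2, rfl, hmix⟩ hdf hc1 hc2
    obtain ⟨hdf1, hdf2⟩ := hdf.bin'
    simp only [PTree.count] at hc1 hc2
    have e1 : q₁.concl = emptyCirquent := by apply ih₁ h1 hdf1 <;> omega
    have e2 : q₂.concl = emptyCirquent := by apply ih₂ h2 hdf2 <;> omega
    obtain ⟨hp, hg⟩ := hmix
    rw [e1, e2] at hp hg
    simp only [PTree.concl] at *
    cases C with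
    | mk pool groups =>
      simp only [emptyCirquent] at hp hg ⊢
      simp at hp hg
      simp [hp, hg]

/-! ### Exchange equivalence -/

lemma map_image_idfun (l : List (Finset ℕ)) : l.map (Finset.image fun i : ℕ => i) = l := by
  rw [List.map_congr_left (fun g _ => Finset.image_id')]
  exact List.map_id' l

/-- `Eqv C D`: `D` is obtained from `C` by permuting the pool (via the index
map `φ`) and permuting the list of ogroups. -/
def Eqv (C D : Cirquent) : Prop :=
  C.pool.length = D.pool.length ∧
  ∃ φ : ℕ → ℕ,
    (∀ i, i < C.pool.length → φ i < C.pool.length) ∧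
    (∀ i j, i < C.pool.length → j < C.pool.length → φ i = φ j → i = j) ∧
    (∀ i, i < C.pool.length → D.pool[φ i]? = C.pool[i]?) ∧
    D.groups.Perm (C.groups.map (Finset.image φ))

lemma Eqv.refl (C : Cirquent) : Eqv C C := by
  refine ⟨rfl, fun i => i, fun i h => h, fun i j _ _ h => h, fun i _ => rfl, ?_⟩
  rw [map_image_idfun]

lemma Eqv.trans {A B C : Cirquent} (h1 : Eqv A B) (h2 : Eqv B C) : Eqv A C := by
  obtain ⟨hlen1, φ, hφ1, hφ2, hφ3, hφ4⟩ := h1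
  obtain ⟨hlen2, ψ, hψ1, hψ2, hψ3, hψ4⟩ := h2
  refine ⟨hlen1.trans hlen2, fun i => ψ (φ i), ?_, ?_, ?_, ?_⟩
  · intro i hi
    have h1 := hψ1 (φ i) (hlen1 ▸ hφ1 i hi)
    show ψ (φ i) < A.pool.length
    omega
  · intro i j hi hj h
    exact hφ2 i j hi hj (hψ2 (φ i) (φ j) (hlen1 ▸ hφ1 i hi) (hlen1 ▸ hφ1 j hj) h)
  · intro i hi
    rw [hψ3 (φ i) (hlen1 ▸ hφ1 i hi), hφ3 i hi]
  · refine hψ4.trans ?_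
    have e : (B.groups.map (Finset.image ψ)).Perm
        ((A.groups.map (Finset.image φ)).map (Finset.image ψ)) := hφ4.map _
    refine e.trans ?_
    have : (A.groups.map (Finset.image φ)).map (Finset.image ψ)
        = A.groups.map (Finset.image fun i => ψ (φ i)) := by
      rw [List.map_map]
      apply List.map_congr_left
      intro g _
      simp only [Function.comp]
      rw [Finset.image_image]
      rfl
    rw [this]

lemma eqv_of_ofExch {P C : Cirquent} (h : OfExchStep P C) : Eqv C P := by
  obtain ⟨l₁, l₂, F, G, hP, hC, hg⟩ := h
  have hlenP : P.pool.length = l₁.length + l₂.length + 2 := by rw [hP]; simp; omega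
  have hlenC : C.pool.length = l₁.length + l₂.length + 2 := by rw [hC]; simp; omega
  refine ⟨by omega, swapIdx l₁.length, ?_, ?_, ?_, ?_⟩
  · intro i hi; unfold swapIdx; split_ifs <;> omega
  · intro i j _ _ h; exact swapIdx_inj _ h
  · intro i hi
    rw [hP, hC]
    rcases Nat.lt_trichotomy i l₁.length with hlt | heq | hgt
    · rw [show swapIdx l₁.length i = i by unfold swapIdx; split_ifs <;> omega]
      rw [List.getElem?_append_left hlt, List.getElem?_append_left hlt]
    · subst heq
      rw [show swapIdx l₁.length l₁.length = l₁.length + 1 by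
        unfold swapIdx; split_ifs <;> omega]
      rw [List.getElem?_append_right (by omega), List.getElem?_append_right (by omega)]
      simp
    · rcases Nat.eq_or_lt_of_le (Nat.succ_le_of_lt hgt) with heq | hgt2
      · rw [show swapIdx l₁.length i = l₁.length by unfold swapIdx; split_ifs <;> omega]
        rw [List.getElem?_append_right (by omega), List.getElem?_append_right (by omega)]
        rw [← heq]
        simp
      · rw [show swapIdx l₁.length i = i by unfold swapIdx; split_ifs <;> omega]
        rw [List.getElem?_append_right (by omega), List.getElem?_append_right (by omega)]
        have h1 : i - l₁.length = (i - l₁.length - 2) + 2 := by omega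
        rw [h1]
        simp
  · rw [hg, List.map_map]
    have he : ∀ g : Finset ℕ,
        (Finset.image (swapIdx l₁.length) ∘ Finset.image (swapIdx l₁.length)) g = g := by
      intro g
      simp only [Function.comp]
      rw [Finset.image_image]
      have : g.image (swapIdx l₁.length ∘ swapIdx l₁.length) = g.image id :=
        Finset.image_congr (fun x _ => swapIdx_swapIdx _ _)
      rw [this, Finset.image_id]
    rw [List.map_congr_left (fun g _ => he g)]
    rw [List.map_id']

lemma eqv_of_ogExch {P C : Cirquent} (h : OgExchStep P C) : Eqv C P := by
  obtain ⟨hp, g₁, g₂, Γ, Δ, hPg, hCg⟩ := h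
  refine ⟨by rw [hp], fun i => i, fun i h => h, fun i j _ _ h => h, fun i _ => by rw [hp], ?_⟩
  rw [map_image_idfun, hPg, hCg]
  exact List.Perm.append_left g₁ (List.Perm.swap Δ Γ g₂)

/-! ### Bubbling and sorting by exchanges -/

lemma DupFree.mk_un {C r q} (h : DupFree q) (h1 : r ≠ RuleName.dupDown)
    (h2 : r ≠ RuleName.dupUp) : DupFree (PTree.un C r q) := by
  obtain ⟨a, b⟩ := h
  constructor <;> simp [PTree.count, h1, h2, a, b]

lemma DupFree.mk_bin {C q₁ q₂} (h1 : DupFree q₁) (h2 : DupFree q₂) :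
    DupFree (PTree.bin C RuleName.mix q₁ q₂) := by
  obtain ⟨a, b⟩ := h1; obtain ⟨c, d⟩ := h2
  constructor <;> simp [PTree.count, a, b, c, d]

/-- Index map realizing "move the element at position `o+l` to position `o`". -/
def mtf (o l : ℕ) : ℕ → ℕ := fun j =>
  if j = o + l then o else if o ≤ j ∧ j < o + l then j + 1 else j

lemma mtf_zero (o j : ℕ) : mtf o 0 j = j := by
  unfold mtf; split_ifs <;> omega

lemma mtf_step (o l j : ℕ) : mtf o l (swapIdx (o + l) j) = mtf o (l + 1) j := by
  unfold mtf swapIdx; split_ifs <;> omega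

lemma bubblePool (a : List Fml) :
    ∀ (pre : List Fml) (x : Fml) (b : List Fml) (G : List (Finset ℕ)) (q : PTree),
    q.Valid → DupFree q → q.concl = ⟨pre ++ (a ++ x :: b), G⟩ →
    ∃ q' : PTree, q'.Valid ∧ DupFree q' ∧
      q'.concl = ⟨pre ++ x :: (a ++ b), G.map (Finset.image (mtf pre.length a.length))⟩ ∧
      q'.nodes ≤ q.nodes + a.length := by
  induction a using List.reverseRecOn with
  | nil =>
    intro pre x b G q hv hdf hc
    refine ⟨q, hv, hdf, ?_, by simp⟩
    rw [hc]
    congr 1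
    have : ∀ g : Finset ℕ, g.image (mtf pre.length 0) = g := by
      intro g
      have : g.image (mtf pre.length 0) = g.image id :=
        Finset.image_congr (fun x _ => mtf_zero _ _)
      rw [this, Finset.image_id]
    simp only [List.length_nil]
    rw [List.map_congr_left (fun g _ => this g)]
    exact (List.map_id' G).symm
  | append_singleton as y ih =>
    intro pre x b G q hv hdf hc
    set C₁ : Cirquent :=
      ⟨pre ++ (as ++ x :: y :: b),
        G.map (Finset.image (swapIdx (pre.length + as.length)))⟩ with hC₁
    have hstep : OfExchStep q.concl C₁ := by
      refine ⟨pre ++ as, b, y, x, ?_, ?_, ?_⟩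
      · rw [hc]; simp
      · simp [hC₁]
      · rw [hc]; simp [hC₁]
    have hv₁ : (PTree.un C₁ RuleName.ofExch q).Valid := ⟨hv, hstep⟩
    have hdf₁ : DupFree (PTree.un C₁ RuleName.ofExch q) :=
      hdf.mk_un (by simp) (by simp)
    obtain ⟨q', hv', hdf', hc', hn'⟩ :=
      ih pre x (y :: b) (G.map (Finset.image (swapIdx (pre.length + as.length))))
        (PTree.un C₁ RuleName.ofExch q) hv₁ hdf₁ rfl
    refine ⟨q', hv', hdf', ?_, ?_⟩
    · rw [hc']
      congr 1
      · simp
      · rw [List.map_map]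
        apply List.map_congr_left
        intro g _
        simp only [Function.comp]
        rw [Finset.image_image]
        have : g.image (mtf pre.length as.length ∘ swapIdx (pre.length + as.length))
            = g.image (mtf pre.length (as.length + 1)) :=
          Finset.image_congr (fun j _ => mtf_step _ _ _)
        rw [this]
        congr 1
        simp
    · have : (PTree.un C₁ RuleName.ofExch q).nodes = q.nodes + 1 := rfl
      simp only [List.length_append, List.length_singleton]
      omega

lemma sortPool (T : List Fml) :
    ∀ (pre P : List Fml) (G : List (Finset ℕ)) (φ : ℕ → ℕ) (q : PTree),
    T.length = P.length →
    (∀ i, i < T.length → φ i < P.length) →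
    (∀ i j, i < T.length → j < T.length → φ i = φ j → i = j) →
    (∀ i, i < T.length → P[φ i]? = T[i]?) →
    q.Valid → DupFree q → q.concl = ⟨pre ++ P, G⟩ →
    ∃ (χ : ℕ → ℕ) (q' : PTree), q'.Valid ∧ DupFree q' ∧
      q'.concl = ⟨pre ++ T, G.map (Finset.image χ)⟩ ∧
      (∀ j, j < pre.length → χ j = j) ∧
      (∀ i, i < T.length → χ (pre.length + φ i) = pre.length + i) ∧
      q'.nodes ≤ q.nodes + T.length * T.length := by
  induction T with
  | nil =>
    intro pre P G φ q hlen hφ1 hφ2 hφ3 hv hdf hc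
    have hP : P = [] := by
      cases P with
      | nil => rfl
      | cons p ps => simp at hlen
    refine ⟨fun j => j, q, hv, hdf, ?_, fun j _ => rfl, by simp, by simp⟩
    rw [hc, hP, map_image_idfun]
  | cons t T' ih =>
    intro pre P G φ q hlen hφ1 hφ2 hφ3 hv hdf hc
    have hn : P.length = T'.length + 1 := by simp at hlen; omega
    set i₀ := φ 0 with hi₀
    have hi₀lt : i₀ < P.length := hφ1 0 (by simp)
    set a := P.take i₀ with ha
    set b := P.drop (i₀ + 1) with hb
    have halen : a.length = i₀ := by rw [ha, List.length_take]; omega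
    have hPt : P[i₀] = t := by
      have h := hφ3 0 (by simp)
      rw [List.getElem?_eq_getElem hi₀lt] at h
      simp at h
      exact h
    have hPdecomp : P = a ++ t :: b := by
      rw [ha, hb, ← hPt, List.getElem_cons_drop]
      exact (List.take_append_drop i₀ P).symm
    obtain ⟨q₁, hv₁, hdf₁, hc₁, hn₁⟩ :=
      bubblePool a pre t b G q hv hdf (by rw [hc, hPdecomp])
    -- recurse on the tail
    have hablen : (a ++ b).length = T'.length := by
      rw [List.length_append, halen, hb, List.length_drop]; omega
    set φ' : ℕ → ℕ := fun i => if φ (i + 1) < i₀ then φ (i + 1) else φ (i + 1) - 1 with hφ'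
    have hφne : ∀ i, i < T'.length → φ (i + 1) ≠ i₀ := by
      intro i hi h
      have := hφ2 (i + 1) 0 (by simp; omega) (by simp) (by rw [h])
      omega
    have hrecbd : ∀ i, i < T'.length → φ' i < (a ++ b).length := by
      intro i hi
      have h1 := hφ1 (i + 1) (by simp; omega)
      have h2 := hφne i hi
      rw [hablen]
      simp only [hφ']
      split_ifs <;> omega
    have hrecinj : ∀ i j, i < T'.length → j < T'.length → φ' i = φ' j → i = j := by
      intro i j hi hj h
      have h1 := hφne i hi
      have h2 := hφne j hj
      have h3 : φ (i + 1) = φ (j + 1) := by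
        simp only [hφ'] at h
        split_ifs at h <;> omega
      have := hφ2 (i + 1) (j + 1) (by simp; omega) (by simp; omega) h3
      omega
    have hrecget : ∀ i, i < T'.length → (a ++ b)[φ' i]? = T'[i]? := by
      intro i hi
      have h1 := hφ3 (i + 1) (by simp; omega)
      rw [List.getElem?_cons_succ] at h1
      have hne := hφne i hi
      have hlt := hφ1 (i + 1) (by simp; omega)
      rcases Nat.lt_or_ge (φ (i + 1)) i₀ with hcase | hcase
      · have h2 : φ' i = φ (i + 1) := by simp only [hφ']; rw [if_pos hcase]
        rw [h2, List.getElem?_append_left (by omega)]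
        rw [ha, List.getElem?_take, if_pos hcase]
        exact h1
      · have h2 : φ' i = φ (i + 1) - 1 := by simp only [hφ']; rw [if_neg (by omega)]
        rw [h2, List.getElem?_append_right (by omega)]
        rw [hb, List.getElem?_drop]
        rw [show i₀ + 1 + (φ (i + 1) - 1 - a.length) = φ (i + 1) by omega]
        exact h1
    obtain ⟨χ', q', hv', hdf', hc', hsp1, hsp2, hn'⟩ :=
      ih (pre ++ [t]) (a ++ b) (G.map (Finset.image (mtf pre.length a.length))) φ' q₁
        (by omega) hrecbd hrecinj hrecget hv₁ hdf₁
        (by rw [hc₁]; congr 1; simp)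
    refine ⟨fun j => χ' (mtf pre.length a.length j), q', hv', hdf', ?_, ?_, ?_, ?_⟩
    · rw [hc']
      congr 1
      · simp
      · rw [List.map_map]
        apply List.map_congr_left
        intro g _
        simp only [Function.comp]
        rw [Finset.image_image]
        rfl
    · intro j hj
      show χ' (mtf pre.length a.length j) = j
      have h1 : mtf pre.length a.length j = j := by
        unfold mtf; split_ifs <;> omega
      rw [h1]
      exact hsp1 j (by simp; omega)
    · intro i hi
      show χ' (mtf pre.length a.length (pre.length + φ i)) = pre.length + i
      rcases Nat.eq_zero_or_pos i with rfl | hpos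
      · have h1 : mtf pre.length a.length (pre.length + φ 0) = pre.length := by
          unfold mtf; split_ifs <;> omega
        rw [h1]
        have h2 := hsp1 pre.length (by simp)
        omega
      · obtain ⟨i', rfl⟩ : ∃ i', i = i' + 1 := ⟨i - 1, by omega⟩
        have hi' : i' < T'.length := by simp at hi; omega
        have hne := hφne i' hi'
        have hlt := hφ1 (i' + 1) hi
        rcases Nat.lt_or_ge (φ (i' + 1)) i₀ with hcase | hcase
        · have h1 : mtf pre.length a.length (pre.length + φ (i' + 1))
              = pre.length + φ (i' + 1) + 1 := by
            unfold mtf; rw [halen]; split_ifs <;> omega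
          have h2 : φ' i' = φ (i' + 1) := by simp only [hφ']; rw [if_pos hcase]
          have h3 := hsp2 i' hi'
          rw [h1]
          rw [h2] at h3
          simp only [List.length_append, List.length_singleton] at h3
          rw [show pre.length + 1 + φ (i' + 1) = pre.length + φ (i' + 1) + 1 by omega] at h3
          omega
        · have h1 : mtf pre.length a.length (pre.length + φ (i' + 1))
              = pre.length + φ (i' + 1) := by
            unfold mtf; rw [halen]; split_ifs <;> omega
          have h2 : φ' i' = φ (i' + 1) - 1 := by
            simp only [hφ']; rw [if_neg (by omega)]
          have h3 := hsp2 i' hi'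
          rw [h1]
          rw [h2] at h3
          simp only [List.length_append, List.length_singleton] at h3
          rw [show pre.length + 1 + (φ (i' + 1) - 1) = pre.length + φ (i' + 1) by omega] at h3
          omega
    · have : T'.length * T'.length + i₀ + 1 ≤ (T'.length + 1) * (T'.length + 1) := by
        have : i₀ ≤ T'.length := by omega
        nlinarith
      simp only [List.length_cons]
      omega

lemma bubbleGroup (u : List (Finset ℕ)) :
    ∀ (preG : List (Finset ℕ)) (x : Finset ℕ) (v : List (Finset ℕ))
      (pool : List Fml) (q : PTree),
    q.Valid → DupFree q → q.concl = ⟨pool, preG ++ (u ++ x :: v)⟩ →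
    ∃ q' : PTree, q'.Valid ∧ DupFree q' ∧
      q'.concl = ⟨pool, preG ++ x :: (u ++ v)⟩ ∧ q'.nodes ≤ q.nodes + u.length := by
  induction u using List.reverseRecOn with
  | nil =>
    intro preG x v pool q hv hdf hc
    exact ⟨q, hv, hdf, by rw [hc]; simp, by simp⟩
  | append_singleton us y ih =>
    intro preG x v pool q hv hdf hc
    set C₁ : Cirquent := ⟨pool, preG ++ (us ++ x :: y :: v)⟩ with hC₁
    have hstep : OgExchStep q.concl C₁ := by
      refine ⟨by rw [hc], preG ++ us, v, y, x, ?_, ?_⟩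
      · rw [hc]; simp
      · simp [hC₁]
    have hv₁ : (PTree.un C₁ RuleName.ogExch q).Valid := ⟨hv, hstep⟩
    have hdf₁ : DupFree (PTree.un C₁ RuleName.ogExch q) :=
      hdf.mk_un (by simp) (by simp)
    obtain ⟨q', hv', hdf', hc', hn'⟩ :=
      ih preG x (y :: v) pool (PTree.un C₁ RuleName.ogExch q) hv₁ hdf₁ rfl
    refine ⟨q', hv', hdf', ?_, ?_⟩
    · rw [hc']; congr 1; simp
    · have : (PTree.un C₁ RuleName.ogExch q).nodes = q.nodes + 1 := rfl
      simp only [List.length_append, List.length_singleton]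
      omega

lemma sortGroups (T : List (Finset ℕ)) :
    ∀ (preG G : List (Finset ℕ)) (pool : List Fml) (q : PTree),
    G.Perm T →
    q.Valid → DupFree q → q.concl = ⟨pool, preG ++ G⟩ →
    ∃ q' : PTree, q'.Valid ∧ DupFree q' ∧
      q'.concl = ⟨pool, preG ++ T⟩ ∧ q'.nodes ≤ q.nodes + T.length * T.length := by
  induction T with
  | nil =>
    intro preG G pool q hperm hv hdf hc
    have : G = [] := hperm.eq_nil
    exact ⟨q, hv, hdf, by rw [hc, this], by simp⟩
  | cons x T' ih =>
    intro preG G pool q hperm hv hdf hc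
    have hx : x ∈ G := hperm.mem_iff.mpr (by simp)
    obtain ⟨u, v, rfl⟩ := List.append_of_mem hx
    obtain ⟨q₁, hv₁, hdf₁, hc₁, hn₁⟩ := bubbleGroup u preG x v pool q hv hdf hc
    have hperm' : (u ++ v).Perm T' := by
      have h1 : (u ++ x :: v).Perm (x :: (u ++ v)) := List.perm_middle
      have h2 : (x :: (u ++ v)).Perm (x :: T') := h1.symm.trans hperm
      exact h2.cons_inv
    obtain ⟨q', hv', hdf', hc', hn'⟩ :=
      ih (preG ++ [x]) (u ++ v) pool q₁ hperm' hv₁ hdf₁ (by rw [hc₁]; congr 1; simp)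
    refine ⟨q', hv', hdf', by rw [hc']; congr 1; simp, ?_⟩
    have hulen : u.length ≤ T'.length := by
      have := hperm.length_eq
      simp at this
      omega
    simp only [List.length_cons]
    nlinarith

/-- Realization: a proof of any cirquent exchange-equivalent to `C` can be
extended, by exchange moves only, to a proof of `C` itself. -/
lemma realize {C : Cirquent} {q : PTree} (hv : q.Valid) (hdf : DupFree q)
    (heqv : Eqv C q.concl) (hgood : Good C) :
    ∃ q' : PTree, q'.Valid ∧ DupFree q' ∧ q'.concl = C ∧
      q'.nodes ≤ q.nodes + C.pool.length * C.pool.length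
        + C.groups.length * C.groups.length := by
  obtain ⟨hlen, φ, h1, h2, h3, h4⟩ := heqv
  obtain ⟨χ, q₁, hv₁, hdf₁, hc₁, hsp1, hsp2, hn₁⟩ :=
    sortPool C.pool [] q.concl.pool q.concl.groups φ q hlen
      (fun i hi => hlen ▸ h1 i hi) h2 h3 hv hdf rfl
  have hsp2' : ∀ i, i < C.pool.length → χ (φ i) = i := by
    intro i hi
    have := hsp2 i hi
    simpa using this
  have hmapeq : (C.groups.map (Finset.image φ)).map (Finset.image χ) = C.groups := by
    rw [List.map_map]
    have he : ∀ g ∈ C.groups, (Finset.image χ ∘ Finset.image φ) g = g := by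
      intro g hg
      simp only [Function.comp]
      rw [Finset.image_image]
      have : g.image (χ ∘ φ) = g.image id := by
        apply Finset.image_congr
        intro j hj
        exact hsp2' j ((hgood g hg).2 j hj)
      rw [this, Finset.image_id]
    rw [List.map_congr_left he]
    exact List.map_id' _
  have hperm : (q.concl.groups.map (Finset.image χ)).Perm C.groups := by
    have := h4.map (Finset.image χ)
    rwa [hmapeq] at this
  obtain ⟨q₂, hv₂, hdf₂, hc₂, hn₂⟩ :=
    sortGroups C.groups [] (q.concl.groups.map (Finset.image χ)) C.pool q₁ hperm hv₁ hdf₁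
      (by rw [hc₁]; congr 1 <;> simp)
  refine ⟨q₂, hv₂, hdf₂, by rw [hc₂]; simp, by omega⟩

/-! ### The main reconstruction -/

/-- Total weight of the "essential" (non-exchange, non-mix) rule applications. -/
def Wt (p : PTree) : ℕ :=
  2 * p.count RuleName.idAx + p.count RuleName.poolWeak + p.count RuleName.ogWeak
    + p.count RuleName.orIntro + p.count RuleName.andIntro

/-- Number of pool-creating rule applications. -/
def Mu (p : PTree) : ℕ := p.count RuleName.idAx + p.count RuleName.poolWeak

lemma eqv_empty {X : Cirquent} (h : Eqv emptyCirquent X) : X = emptyCirquent := by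
  obtain ⟨hlen, φ, -, -, -, h4⟩ := h
  have hpool : X.pool = [] := by
    have : X.pool.length = 0 := by
      rw [← hlen]; rfl
    exact List.length_eq_zero_iff.mp this
  have hgr : X.groups = [] := by
    have : X.groups.Perm ([] : List (Finset ℕ)) := by
      simpa [emptyCirquent] using h4
    exact this.eq_nil
  cases X
  simp only [emptyCirquent] at *
  simp [hpool, hgr]

lemma mix_empty_left {B C : Cirquent} (h : MixStep emptyCirquent B C) : C = B := by
  obtain ⟨hp, hg⟩ := h
  have h1 : C.pool = B.pool := by simpa [emptyCirquent] using hp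
  have h2 : C.groups = B.groups := by
    rw [hg]
    simp only [emptyCirquent, List.nil_append, List.length_nil]
    have : ∀ g : Finset ℕ, g.image (· + 0) = g := by
      intro g
      have : g.image (· + 0) = g.image id := Finset.image_congr (fun x _ => by simp)
      rw [this, Finset.image_id]
    rw [List.map_congr_left (fun g _ => this g)]
    exact List.map_id' _
  cases C; cases B
  simp only at h1 h2
  simp [h1, h2]

lemma mix_empty_right {A C : Cirquent} (h : MixStep A emptyCirquent C) : C = A := by
  obtain ⟨hp, hg⟩ := h
  have h1 : C.pool = A.pool := by simpa [emptyCirquent] using hp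
  have h2 : C.groups = A.groups := by
    rw [hg]; simp [emptyCirquent]
  cases C; cases A
  simp only at h1 h2
  simp [h1, h2]

lemma size_bounds {N : ℕ} {p : PTree} (hv : p.Valid) (hdf : DupFree p)
    (hN : p.concl.plen ≤ N) :
    p.concl.pool.length ≤ N ∧ p.concl.groups.length ≤ N := by
  constructor
  · exact le_trans (pcount_le_plen _) hN
  · have hb := count_b p hv hdf
    have ha := count_a p hv hdf
    omega

lemma Mu_empty {p : PTree} (hv : p.Valid) (hdf : DupFree p) (h : Mu p = 0) :
    p.concl = emptyCirquent := by
  unfold Mu at h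
  exact concl_empty_of_no_create p hv hdf (by omega) (by omega)

lemma rebuild (N : ℕ) : ∀ p : PTree, p.Valid → DupFree p → p.concl.plen ≤ N →
    ∃ q : PTree, q.Valid ∧ DupFree q ∧ Eqv p.concl q.concl ∧
      ((Mu p = 0 ∧ q.nodes ≤ 1) ∨
       (1 ≤ Mu p ∧
        q.nodes ≤ (2*(N*N) + 2) * Wt p + (4*(N*N) + 2) * (2 * Mu p - 1))) := by
  intro p
  induction p with
  | leaf C r =>
    rintro hv hdf -
    rcases hv with ⟨rfl, rfl⟩ | ⟨rfl, F, rfl⟩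
    · refine ⟨PTree.leaf emptyCirquent RuleName.emptyAx, Or.inl ⟨rfl, rfl⟩, hdf,
        Eqv.refl _, Or.inl ⟨?_, le_refl 1⟩⟩
      simp [Mu, PTree.count]
    · refine ⟨PTree.leaf (idCirquent F) RuleName.idAx, Or.inr ⟨rfl, F, rfl⟩, hdf,
        Eqv.refl _, Or.inr ⟨?_, ?_⟩⟩
      · simp [Mu, PTree.count]
      · have h1 : Wt (PTree.leaf (idCirquent F) RuleName.idAx) = 2 := by
          simp [Wt, PTree.count]
        have h2 : Mu (PTree.leaf (idCirquent F) RuleName.idAx) = 1 := by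
          simp [Mu, PTree.count]
        rw [h1, h2]
        have hnodes : (PTree.leaf (idCirquent F) RuleName.idAx).nodes = 1 := rfl
        rw [hnodes]
        have e : (2*(N*N) + 2) * 2 = 4*(N*N) + 4 := by ring
        rw [e]
        omega
  | un C r q₀ ih =>
    rintro ⟨hq, hr⟩ hdf hN
    obtain ⟨hdfq, hd1, hd2⟩ := hdf.un'
    have hNq : q₀.concl.plen ≤ N := le_trans (step_plen_le hr) hN
    obtain ⟨R, hvR, hdfR, heqvR, hbR⟩ := ih hq hdfq hNq
    have hgoodq := valid_good q₀ hq hdfq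
    obtain ⟨hsz1, hsz2⟩ := size_bounds hq hdfq hNq
    have hsq1 : q₀.concl.pool.length * q₀.concl.pool.length ≤ N * N :=
      Nat.mul_le_mul hsz1 hsz1
    have hsq2 : q₀.concl.groups.length * q₀.concl.groups.length ≤ N * N :=
      Nat.mul_le_mul hsz2 hsz2
    cases r <;> simp only [unRel] at hr
    · -- ofExch
      refine ⟨R, hvR, hdfR, (eqv_of_ofExch hr).trans heqvR, ?_⟩
      have hW : Wt (PTree.un C RuleName.ofExch q₀) = Wt q₀ := by simp [Wt, PTree.count]
      have hM : Mu (PTree.un C RuleName.ofExch q₀) = Mu q₀ := by simp [Mu, PTree.count]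
      rw [hW, hM]; exact hbR
    · -- ogExch
      refine ⟨R, hvR, hdfR, (eqv_of_ogExch hr).trans heqvR, ?_⟩
      have hW : Wt (PTree.un C RuleName.ogExch q₀) = Wt q₀ := by simp [Wt, PTree.count]
      have hM : Mu (PTree.un C RuleName.ogExch q₀) = Mu q₀ := by simp [Mu, PTree.count]
      rw [hW, hM]; exact hbR
    · -- poolWeak
      obtain ⟨R', hvR', hdfR', hcR', hnR'⟩ := realize hvR hdfR heqvR hgoodq
      refine ⟨PTree.un C RuleName.poolWeak R', ⟨hvR', by rw [hcR']; exact hr⟩,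
        hdfR'.mk_un (by simp) (by simp), Eqv.refl _, Or.inr ⟨?_, ?_⟩⟩
      · simp [Mu, PTree.count]; omega
      · have hW : Wt (PTree.un C RuleName.poolWeak q₀) = Wt q₀ + 1 := by
          simp [Wt, PTree.count]; ring
        have hM : Mu (PTree.un C RuleName.poolWeak q₀) = Mu q₀ + 1 := by
          simp [Mu, PTree.count]; ring
        have hnodes : (PTree.un C RuleName.poolWeak R').nodes = R'.nodes + 1 := rfl
        rw [hW, hM, hnodes]
        have e1 : (2*(N*N) + 2) * (Wt q₀ + 1) = (2*(N*N) + 2) * Wt q₀ + (2*(N*N) + 2) := by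
            rw [Nat.mul_add, Nat.mul_one]
        rcases hbR with ⟨hM0, hle⟩ | ⟨hM1, hle⟩
        · have e2 : 2 * (Mu q₀ + 1) - 1 = 1 := by omega
          rw [e2, e1]
          have e3 : (4*(N*N) + 2) * 1 = 4*(N*N) + 2 := Nat.mul_one _
          rw [e3]
          omega
        · have e2 : 2 * (Mu q₀ + 1) - 1 = (2 * Mu q₀ - 1) + 2 := by omega
          rw [e2, e1]
          have e3 : (4*(N*N) + 2) * ((2 * Mu q₀ - 1) + 2)
              = (4*(N*N) + 2) * (2 * Mu q₀ - 1) + (4*(N*N) + 2) * 2 := by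
            rw [Nat.mul_add]
          rw [e3]
          omega
    · -- ogWeak
      obtain ⟨R', hvR', hdfR', hcR', hnR'⟩ := realize hvR hdfR heqvR hgoodq
      refine ⟨PTree.un C RuleName.ogWeak R', ⟨hvR', by rw [hcR']; exact hr⟩,
        hdfR'.mk_un (by simp) (by simp), Eqv.refl _, Or.inr ⟨?_, ?_⟩⟩
      · rcases hbR with ⟨hM0, -⟩ | ⟨hM1, -⟩
        · exfalso
          have hempty := Mu_empty hq hdfq hM0
          obtain ⟨-, g₁, g₂, Γ, j, -, -, hPg, -⟩ := hr
          rw [hempty] at hPg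
          exact absurd (congrArg List.length hPg) (by simp [emptyCirquent])
        · simp only [Mu, PTree.count] at hM1 ⊢
          simp only [reduceCtorEq, reduceIte, ite_true, ite_false, zero_add, add_zero]
          omega
      · rcases hbR with ⟨hM0, -⟩ | ⟨hM1, hle⟩
        · exfalso
          have hempty := Mu_empty hq hdfq hM0
          obtain ⟨-, g₁, g₂, Γ, j, -, -, hPg, -⟩ := hr
          rw [hempty] at hPg
          exact absurd (congrArg List.length hPg) (by simp [emptyCirquent])
        · have hW : Wt (PTree.un C RuleName.ogWeak q₀) = Wt q₀ + 1 := by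
            simp [Wt, PTree.count]; ring
          have hM : Mu (PTree.un C RuleName.ogWeak q₀) = Mu q₀ := by
            simp [Mu, PTree.count]
          have hnodes : (PTree.un C RuleName.ogWeak R').nodes = R'.nodes + 1 := rfl
          rw [hW, hM, hnodes]
          have e1 : (2*(N*N) + 2) * (Wt q₀ + 1) = (2*(N*N) + 2) * Wt q₀ + (2*(N*N) + 2) := by
            rw [Nat.mul_add, Nat.mul_one]
          rw [e1]
          omega
    · exact absurd rfl hd1
    · exact absurd rfl hd2
    · -- orIntro
      obtain ⟨R', hvR', hdfR', hcR', hnR'⟩ := realize hvR hdfR heqvR hgoodq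
      refine ⟨PTree.un C RuleName.orIntro R', ⟨hvR', by rw [hcR']; exact hr⟩,
        hdfR'.mk_un (by simp) (by simp), Eqv.refl _, Or.inr ⟨?_, ?_⟩⟩
      · rcases hbR with ⟨hM0, -⟩ | ⟨hM1, -⟩
        · exfalso
          have hempty := Mu_empty hq hdfq hM0
          obtain ⟨l₁, l₂, F, G, hPp, -, -⟩ := hr
          rw [hempty] at hPp
          exact absurd (congrArg List.length hPp) (by simp [emptyCirquent])
        · simp only [Mu, PTree.count] at hM1 ⊢
          simp only [reduceCtorEq, reduceIte, ite_true, ite_false, zero_add, add_zero]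
          omega
      · rcases hbR with ⟨hM0, -⟩ | ⟨hM1, hle⟩
        · exfalso
          have hempty := Mu_empty hq hdfq hM0
          obtain ⟨l₁, l₂, F, G, hPp, -, -⟩ := hr
          rw [hempty] at hPp
          exact absurd (congrArg List.length hPp) (by simp [emptyCirquent])
        · have hW : Wt (PTree.un C RuleName.orIntro q₀) = Wt q₀ + 1 := by
            simp [Wt, PTree.count]; ring
          have hM : Mu (PTree.un C RuleName.orIntro q₀) = Mu q₀ := by
            simp [Mu, PTree.count]
          have hnodes : (PTree.un C RuleName.orIntro R').nodes = R'.nodes + 1 := rfl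
          rw [hW, hM, hnodes]
          have e1 : (2*(N*N) + 2) * (Wt q₀ + 1) = (2*(N*N) + 2) * Wt q₀ + (2*(N*N) + 2) := by
            rw [Nat.mul_add, Nat.mul_one]
          rw [e1]
          omega
    · -- andIntro
      obtain ⟨R', hvR', hdfR', hcR', hnR'⟩ := realize hvR hdfR heqvR hgoodq
      refine ⟨PTree.un C RuleName.andIntro R', ⟨hvR', by rw [hcR']; exact hr⟩,
        hdfR'.mk_un (by simp) (by simp), Eqv.refl _, Or.inr ⟨?_, ?_⟩⟩
      · rcases hbR with ⟨hM0, -⟩ | ⟨hM1, -⟩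
        · exfalso
          have hempty := Mu_empty hq hdfq hM0
          obtain ⟨l₁, l₂, F, G, merged, hPp, -, -, -⟩ := hr
          rw [hempty] at hPp
          exact absurd (congrArg List.length hPp) (by simp [emptyCirquent])
        · simp only [Mu, PTree.count] at hM1 ⊢
          simp only [reduceCtorEq, reduceIte, ite_true, ite_false, zero_add, add_zero]
          omega
      · rcases hbR with ⟨hM0, -⟩ | ⟨hM1, hle⟩
        · exfalso
          have hempty := Mu_empty hq hdfq hM0
          obtain ⟨l₁, l₂, F, G, merged, hPp, -, -, -⟩ := hr
          rw [hempty] at hPp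
          exact absurd (congrArg List.length hPp) (by simp [emptyCirquent])
        · have hW : Wt (PTree.un C RuleName.andIntro q₀) = Wt q₀ + 1 := by
            simp [Wt, PTree.count]; ring
          have hM : Mu (PTree.un C RuleName.andIntro q₀) = Mu q₀ := by
            simp [Mu, PTree.count]
          have hnodes : (PTree.un C RuleName.andIntro R').nodes = R'.nodes + 1 := rfl
          rw [hW, hM, hnodes]
          have e1 : (2*(N*N) + 2) * (Wt q₀ + 1) = (2*(N*N) + 2) * Wt q₀ + (2*(N*N) + 2) := by
            rw [Nat.mul_add, Nat.mul_one]
          rw [e1]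
          omega
  | bin C r q₁ q₂ ih₁ ih₂ =>
    rintro ⟨h1, h2, rfl, hmix⟩ hdf hN
    obtain ⟨hdf1, hdf2⟩ := hdf.bin'
    have hplen := (mix_plen hmix).1
    have hN1 : q₁.concl.plen ≤ N := by
      have : C.plen ≤ N := hN
      omega
    have hN2 : q₂.concl.plen ≤ N := by
      have : C.plen ≤ N := hN
      omega
    obtain ⟨R₁, hvR₁, hdfR₁, heqvR₁, hbR₁⟩ := ih₁ h1 hdf1 hN1
    obtain ⟨R₂, hvR₂, hdfR₂, heqvR₂, hbR₂⟩ := ih₂ h2 hdf2 hN2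
    have hWsum : Wt (PTree.bin C RuleName.mix q₁ q₂) = Wt q₁ + Wt q₂ := by
      simp [Wt, PTree.count]; ring
    have hMsum : Mu (PTree.bin C RuleName.mix q₁ q₂) = Mu q₁ + Mu q₂ := by
      simp [Mu, PTree.count]; ring
    by_cases hMz1 : Mu q₁ = 0
    · -- left premise is empty; the conclusion is q₂'s conclusion
      have hempty := Mu_empty h1 hdf1 hMz1
      have hCeq : C = q₂.concl := mix_empty_left (hempty ▸ hmix)
      refine ⟨R₂, hvR₂, hdfR₂, by rw [hCeq] at *; exact heqvR₂, ?_⟩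
      rw [hWsum, hMsum, hMz1]
      rcases hbR₂ with ⟨hM0, hle⟩ | ⟨hM1, hle⟩
      · exact Or.inl ⟨by omega, hle⟩
      · refine Or.inr ⟨by omega, ?_⟩
        have e1 : (2*(N*N) + 2) * (Wt q₁ + Wt q₂)
            = (2*(N*N) + 2) * Wt q₁ + (2*(N*N) + 2) * Wt q₂ := Nat.mul_add _ _ _
        rw [e1]
        simp only [zero_add]
        omega
    · by_cases hMz2 : Mu q₂ = 0
      · have hempty := Mu_empty h2 hdf2 hMz2
        have hCeq : C = q₁.concl := mix_empty_right (hempty ▸ hmix)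
        refine ⟨R₁, hvR₁, hdfR₁, by rw [hCeq] at *; exact heqvR₁, ?_⟩
        rw [hWsum, hMsum, hMz2]
        rcases hbR₁ with ⟨hM0, hle⟩ | ⟨hM1, hle⟩
        · exact Or.inl ⟨by omega, hle⟩
        · refine Or.inr ⟨by omega, ?_⟩
          have e1 : (2*(N*N) + 2) * (Wt q₁ + Wt q₂)
              = (2*(N*N) + 2) * Wt q₁ + (2*(N*N) + 2) * Wt q₂ := Nat.mul_add _ _ _
          rw [e1]
          simp only [add_zero]
          omega
      · -- genuine mix
        have hgood1 := valid_good q₁ h1 hdf1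
        have hgood2 := valid_good q₂ h2 hdf2
        obtain ⟨hs11, hs12⟩ := size_bounds h1 hdf1 hN1
        obtain ⟨hs21, hs22⟩ := size_bounds h2 hdf2 hN2
        obtain ⟨R₁', hvR₁', hdfR₁', hcR₁', hnR₁'⟩ := realize hvR₁ hdfR₁ heqvR₁ hgood1
        obtain ⟨R₂', hvR₂', hdfR₂', hcR₂', hnR₂'⟩ := realize hvR₂ hdfR₂ heqvR₂ hgood2
        refine ⟨PTree.bin C RuleName.mix R₁' R₂',
          ⟨hvR₁', hvR₂', rfl, by rw [hcR₁', hcR₂']; exact hmix⟩,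
          hdfR₁'.mk_bin hdfR₂', Eqv.refl _, Or.inr ⟨?_, ?_⟩⟩
        · rw [hMsum]; omega
        · rcases hbR₁ with ⟨hM0, -⟩ | ⟨hM1, hle1⟩
          · exact absurd hM0 hMz1
          rcases hbR₂ with ⟨hM0, -⟩ | ⟨hM2, hle2⟩
          · exact absurd hM0 hMz2
          have hnodes : (PTree.bin C RuleName.mix R₁' R₂').nodes
              = R₁'.nodes + R₂'.nodes + 1 := rfl
          rw [hWsum, hMsum, hnodes]
          have hq11 : q₁.concl.pool.length * q₁.concl.pool.length ≤ N * N :=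
            Nat.mul_le_mul hs11 hs11
          have hq12 : q₁.concl.groups.length * q₁.concl.groups.length ≤ N * N :=
            Nat.mul_le_mul hs12 hs12
          have hq21 : q₂.concl.pool.length * q₂.concl.pool.length ≤ N * N :=
            Nat.mul_le_mul hs21 hs21
          have hq22 : q₂.concl.groups.length * q₂.concl.groups.length ≤ N * N :=
            Nat.mul_le_mul hs22 hs22
          have e1 : (2*(N*N) + 2) * (Wt q₁ + Wt q₂)
              = (2*(N*N) + 2) * Wt q₁ + (2*(N*N) + 2) * Wt q₂ := Nat.mul_add _ _ _
          have e2 : 2 * (Mu q₁ + Mu q₂) - 1 = (2 * Mu q₁ - 1) + (2 * Mu q₂ - 1) + 1 := by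
            omega
          have e3 : (4*(N*N) + 2) * ((2 * Mu q₁ - 1) + (2 * Mu q₂ - 1) + 1)
              = (4*(N*N) + 2) * (2 * Mu q₁ - 1) + (4*(N*N) + 2) * (2 * Mu q₂ - 1)
                + (4*(N*N) + 2) := by
            rw [Nat.mul_add, Nat.mul_add, Nat.mul_one]
          rw [e1, e2, e3]
          omega

lemma fmlCirquent_plen (F : Fml) : (fmlCirquent F).plen = F.len := by
  simp [Cirquent.plen, fmlCirquent]

lemma fmlCirquent_arcs (F : Fml) : (fmlCirquent F).arcs = 1 := by
  simp [Cirquent.arcs, fmlCirquent]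

lemma fmlCirquent_good (F : Fml) : Good (fmlCirquent F) := by
  intro g hg
  simp only [fmlCirquent, List.mem_cons, List.not_mem_nil, or_false] at hg
  subst hg
  exact ⟨⟨0, by simp⟩, fun j hj => by simp at hj; simp [fmlCirquent, hj]⟩

theorem main_bound (F : Fml) (h : ProvesCL5m F) :
    ∃ p : PTree, p.Valid ∧ DupFree p ∧ p.concl = fmlCirquent F ∧
      p.nodes ≤ 100 * F.len ^ 6 := by
  obtain ⟨p, hv, hdf, hc⟩ := h
  set k := F.len with hk'
  have hk : 1 ≤ k := F.one_le_len
  have hplen : p.concl.plen = k := by rw [hc, fmlCirquent_plen]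
  obtain ⟨q, hvq, hdfq, heqv, hb⟩ := rebuild k p hv hdf (le_of_eq hplen)
  -- the top conclusion is not empty, so we are in the second branch
  rcases hb with ⟨hM0, -⟩ | ⟨hM1, hle⟩
  · exfalso
    have := Mu_empty hv hdf hM0
    rw [hc] at this
    have := congrArg (fun C => C.pool.length) this
    simp [fmlCirquent, emptyCirquent] at this
  -- realize the exact conclusion
  have hgood : Good p.concl := by rw [hc]; exact fmlCirquent_good F
  obtain ⟨p', hvp', hdfp', hcp', hnp'⟩ := realize hvq hdfq heqv hgood
  refine ⟨p', hvp', hdfp', by rw [hcp', hc], ?_⟩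
  have hsz : p.concl.pool.length = 1 ∧ p.concl.groups.length = 1 := by
    rw [hc]; constructor <;> simp [fmlCirquent]
  -- counting bounds
  have hca := count_a p hv hdf
  have hcb := count_b p hv hdf
  have hcc := count_c k p hv hdf (le_of_eq hplen)
  have harcs : p.concl.arcs = 1 := by rw [hc, fmlCirquent_arcs]
  have hintro : p.count RuleName.orIntro + p.count RuleName.andIntro ≤ k := by omega
  have hogw : p.count RuleName.ogWeak ≤ 1 + (k*k + 2*k) * k := by
    have h1 : (k*k + 2*k) * (p.count RuleName.orIntro + p.count RuleName.andIntro)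
        ≤ (k*k + 2*k) * k := Nat.mul_le_mul_left _ hintro
    omega
  have hW : Wt p ≤ k + (1 + (k*k + 2*k) * k) := by
    unfold Wt
    omega
  have hMu : Mu p ≤ k := by
    unfold Mu
    omega
  have h2M : 2 * Mu p - 1 ≤ 2 * k := by omega
  have hq1 : (2*(k*k) + 2) * Wt p ≤ (2*(k*k) + 2) * (k + (1 + (k*k + 2*k) * k)) :=
    Nat.mul_le_mul_left _ hW
  have hq2 : (4*(k*k) + 2) * (2 * Mu p - 1) ≤ (4*(k*k) + 2) * (2 * k) :=
    Nat.mul_le_mul_left _ h2M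
  have htot : p'.nodes ≤
      (2*(k*k) + 2) * (k + (1 + (k*k + 2*k) * k)) + (4*(k*k) + 2) * (2 * k) + 2 := by
    rw [hsz.1, hsz.2] at hnp'
    omega
  have hexp : (2*(k*k) + 2) * (k + (1 + (k*k + 2*k) * k)) + (4*(k*k) + 2) * (2 * k) + 2
      = 2*k^5 + 4*k^4 + 12*k^3 + 6*k^2 + 6*k + 4 := by ring
  rw [hexp] at htot
  have p5 : k^5 ≤ k^6 := Nat.pow_le_pow_right hk (by omega)
  have p4 : k^4 ≤ k^6 := Nat.pow_le_pow_right hk (by omega)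
  have p3 : k^3 ≤ k^6 := Nat.pow_le_pow_right hk (by omega)
  have p2 : k^2 ≤ k^6 := Nat.pow_le_pow_right hk (by omega)
  have p1 : k ≤ k^6 := by
    calc k = k^1 := (pow_one k).symm
      _ ≤ k^6 := Nat.pow_le_pow_right hk (by omega)
  have p0 : 1 ≤ k^6 := Nat.one_le_pow _ _ (by omega)
  omega

-- INSERT HERE

end CirquentCalc

/-- There is a constant c such that every formula F provable in CL5⁻
of length k has a CL5⁻ proof using at most c·k⁶ rule applications. -/
theorem cl5m_polysize_rule_applications :
    ∃ c : ℕ, ∀ F : Fml, ProvesCL5m F →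
      ∃ p : PTree, p.Valid ∧ DupFree p ∧ p.concl = fmlCirquent F ∧
        p.nodes ≤ c * F.len ^ 6 :=
  ⟨100, fun F h => CirquentCalc.main_bound F h⟩
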